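/- arXiv:2310.00286 — 9 statements merged into one kernel-verified Lean document; each statement's English description precedes it below -/
import Mathlib

section
/- Fix an integer N ≥ 2, masses m₁,…,m_{N−1} > 0, points a₁,…,a_N in ℝ² with aᵢ ≠ a_N for all 1 ≤ i ≤ N−1, and a real number μ > 0. Assume the Euler–Moulton setting: the second coordinate of aᵢ is 0 for all 1 ≤ i ≤ N−1, the second coordinate of a_N is nonzero, and the central configuration equation ∑_{j=1}^{N−1} mⱼ (aⱼ − a_N)/|aⱼ − a_N|³ = −μ·a_N holds. Define D = I₂ − (1/μ)(∑_{i=1}^{N−1} mᵢ/|aᵢ − a_N|³)·I₂ + (3/μ)·∑_{i=1}^{N−1} mᵢ (aᵢ − a_N)(aᵢ − a_N)ᵀ/|aᵢ − a_N|⁵. Then D is a symmetric matrix with trace(D) = 3 and det(D) ≥ 0; consequently the two eigenvalues λ₃, λ₄ of D are real, satisfy λ₃ ≥ 0, λ₄ ≥ 0, and λ₃ + λ₄ = 3. -/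
/-- The outer product `v vᵀ` of a vector `v ∈ ℝ²` with itself, as a 2×2 matrix. -/
noncomputable def outer (v : EuclideanSpace ℝ (Fin 2)) : Matrix (Fin 2) (Fin 2) ℝ :=
  Matrix.of fun p q => v p * v q

open Polynomial in
lemma charpoly_fin_two' (M : Matrix (Fin 2) (Fin 2) ℝ) :
    M.charpoly = X ^ 2 - C M.trace * X + C M.det := by
  rw [Matrix.charpoly, Matrix.det_fin_two, Matrix.trace_fin_two, Matrix.det_fin_two,
    Matrix.charmatrix_apply_eq, Matrix.charmatrix_apply_eq,
    Matrix.charmatrix_apply_ne _ _ _ (by decide), Matrix.charmatrix_apply_ne _ _ _ (by decide)]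
  simp only [map_add, map_mul, map_sub]
  ring

set_option maxHeartbeats 1000000 in
/-- in the Euler–Moulton setting, the central-configuration matrix `D` is
symmetric, has trace 3 and nonnegative determinant; consequently its two eigenvalues
`λ₃, λ₄` are real, nonnegative and satisfy `λ₃ + λ₄ = 3`. -/
theorem statement5 (N : ℕ) (hN : 2 ≤ N)
    (m : Fin (N - 1) → ℝ) (hm : ∀ i, 0 < m i)
    (a : Fin (N - 1) → EuclideanSpace ℝ (Fin 2)) (aN : EuclideanSpace ℝ (Fin 2))
    (ha : ∀ i, a i ≠ aN)
    (μ : ℝ) (hμ : 0 < μ)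
    (hline : ∀ i, a i 1 = 0) (hoff : aN 1 ≠ 0)
    (hcc : ∑ j, (m j / ‖a j - aN‖ ^ 3) • (a j - aN) = -μ • aN)
    (D : Matrix (Fin 2) (Fin 2) ℝ)
    (hD : D = 1 - ((1 / μ) * ∑ i, m i / ‖a i - aN‖ ^ 3) • (1 : Matrix (Fin 2) (Fin 2) ℝ)
        + (3 / μ) • ∑ i, (m i / ‖a i - aN‖ ^ 5) • outer (a i - aN)) :
    D.IsSymm ∧ D.trace = 3 ∧ 0 ≤ D.det ∧
      ∃ lam3 lam4 : ℝ,
        D.charpoly = (Polynomial.X - Polynomial.C lam3) * (Polynomial.X - Polynomial.C lam4) ∧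
        0 ≤ lam3 ∧ 0 ≤ lam4 ∧ lam3 + lam4 = 3 := by
  have hr : ∀ i, (0:ℝ) < ‖a i - aN‖ := fun i =>
    norm_pos_iff.mpr (sub_ne_zero.mpr (ha i))
  -- second coordinate of a i - aN
  have hv1 : ∀ i, (a i - aN) 1 = -(aN 1) := fun i => by
    simp [PiLp.sub_apply, hline i]
  -- norm squared
  have hr2 : ∀ i, ((a i - aN) 0) ^ 2 + (aN 1) ^ 2 = ‖a i - aN‖ ^ 2 := by
    intro i
    rw [EuclideanSpace.norm_eq, Real.sq_sqrt (by positivity)]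
    simp only [Fin.sum_univ_two, Real.norm_eq_abs, sq_abs, PiLp.sub_apply, hline i]
    ring
  -- S = μ
  have hS : ∑ i, m i / ‖a i - aN‖ ^ 3 = μ := by
    have h1 : (∑ j, (m j / ‖a j - aN‖ ^ 3) • (a j - aN)) 1 = (-μ • aN) 1 := congrArg (fun v => v 1) hcc
    have hL : (∑ j, (m j / ‖a j - aN‖ ^ 3) • (a j - aN)) 1
        = ∑ j, (m j / ‖a j - aN‖ ^ 3) * ((a j - aN) 1) := by
      rw [show ((∑ j, (m j / ‖a j - aN‖ ^ 3) • (a j - aN)) 1 : ℝ)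
        = ∑ j, ((m j / ‖a j - aN‖ ^ 3) • (a j - aN)) 1 by rw [WithLp.ofLp_sum, Finset.sum_apply]]
      rfl
    have h2 : (-μ • aN) 1 = -μ * aN 1 := rfl
    rw [hL, h2] at h1
    simp only [hv1] at h1
    have h3 : (∑ i, m i / ‖a i - aN‖ ^ 3) * aN 1 = μ * aN 1 := by
      rw [Finset.sum_mul]
      have : ∀ j ∈ Finset.univ, m j / ‖a j - aN‖ ^ 3 * aN 1
          = -(m j / ‖a j - aN‖ ^ 3 * -(aN 1)) := fun j _ => by ring
      rw [Finset.sum_congr rfl this, Finset.sum_neg_distrib, h1]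
      ring
    exact mul_right_cancel₀ hoff h3
  -- entries of D
  have hDapp : ∀ p q, D p q = (1 : Matrix (Fin 2) (Fin 2) ℝ) p q
      - (1 / μ * μ) * (1 : Matrix (Fin 2) (Fin 2) ℝ) p q
      + (3 / μ) * ∑ i, (m i / ‖a i - aN‖ ^ 5) * ((a i - aN) p * (a i - aN) q) := by
    intro p q
    rw [hD, hS]
    simp [Matrix.add_apply, Matrix.sub_apply, Matrix.smul_apply, Matrix.sum_apply, outer,
      Finset.mul_sum, mul_assoc]
  have hone : (1:ℝ) / μ * μ = 1 := by field_simp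
  have hD00 : D 0 0 = (3 / μ) * ∑ i, (m i / ‖a i - aN‖ ^ 5) * ((a i - aN) 0) ^ 2 := by
    rw [hDapp 0 0, hone]
    simp [Matrix.one_apply, sq]
  have hoff01 : ∀ i : Fin (N-1), m i / ‖a i - aN‖ ^ 5 * ((a i - aN) 0 * (a i - aN) 1)
      = -(aN 1) * (m i / ‖a i - aN‖ ^ 5 * (a i - aN) 0) := fun i => by
    rw [hv1 i]; ring
  have hoff10 : ∀ i : Fin (N-1), m i / ‖a i - aN‖ ^ 5 * ((a i - aN) 1 * (a i - aN) 0)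
      = -(aN 1) * (m i / ‖a i - aN‖ ^ 5 * (a i - aN) 0) := fun i => by
    rw [hv1 i]; ring
  have hD01 : D 0 1 = (3 / μ) * (-(aN 1)) * ∑ i, (m i / ‖a i - aN‖ ^ 5) * (a i - aN) 0 := by
    rw [hDapp 0 1, hone]
    rw [Finset.sum_congr rfl (fun i _ => hoff01 i), ← Finset.mul_sum]
    simp [Matrix.one_apply_ne (by decide : (0:Fin 2) ≠ 1)]
    ring
  have hD10 : D 1 0 = (3 / μ) * (-(aN 1)) * ∑ i, (m i / ‖a i - aN‖ ^ 5) * (a i - aN) 0 := by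
    rw [hDapp 1 0, hone]
    rw [Finset.sum_congr rfl (fun i _ => hoff10 i), ← Finset.mul_sum]
    simp [Matrix.one_apply_ne (by decide : (1:Fin 2) ≠ 0)]
    ring
  have hD11 : D 1 1 = (3 / μ) * (aN 1) ^ 2 * ∑ i, m i / ‖a i - aN‖ ^ 5 := by
    rw [hDapp 1 1, hone]
    have : ∀ i : Fin (N-1), m i / ‖a i - aN‖ ^ 5 * ((a i - aN) 1 * (a i - aN) 1)
        = (aN 1) ^ 2 * (m i / ‖a i - aN‖ ^ 5) := fun i => by rw [hv1 i]; ring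
    rw [Finset.sum_congr rfl (fun i _ => this i), ← Finset.mul_sum]
    simp [Matrix.one_apply_eq]
    ring
  -- symmetry
  have hsymm : D.IsSymm := by
    rw [Matrix.IsSymm]
    ext p q
    rw [Matrix.transpose_apply, hDapp p q, hDapp q p, Matrix.one_apply, Matrix.one_apply]
    by_cases h : p = q
    · subst h; ring_nf
    · rw [if_neg h, if_neg (Ne.symm h)]
      have : ∑ i, m i / ‖a i - aN‖ ^ 5 * ((a i - aN) q * (a i - aN) p)
          = ∑ i, m i / ‖a i - aN‖ ^ 5 * ((a i - aN) p * (a i - aN) q) :=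
        Finset.sum_congr rfl fun i _ => by ring
      rw [this]
  -- trace
  have hsum5 : ∀ i, m i / ‖a i - aN‖ ^ 5 * (((a i - aN) 0) ^ 2 + (aN 1) ^ 2)
      = m i / ‖a i - aN‖ ^ 3 := by
    intro i
    have hrne : ‖a i - aN‖ ≠ 0 := ne_of_gt (hr i)
    rw [hr2 i]
    field_simp
  have htrace : D.trace = 3 := by
    rw [Matrix.trace_fin_two, hD00, hD11]
    have : (3 / μ) * ∑ i, (m i / ‖a i - aN‖ ^ 5) * ((a i - aN) 0) ^ 2
        + (3 / μ) * (aN 1) ^ 2 * ∑ i, m i / ‖a i - aN‖ ^ 5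
        = (3 / μ) * ∑ i, (m i / ‖a i - aN‖ ^ 5) * (((a i - aN) 0) ^ 2 + (aN 1) ^ 2) := by
      rw [Finset.mul_sum, Finset.mul_sum, Finset.mul_sum, ← Finset.sum_add_distrib]
      exact Finset.sum_congr rfl fun i _ => by ring
    rw [this]
    simp_rw [hsum5]
    rw [hS]
    field_simp
  -- determinant
  have hdet : 0 ≤ D.det := by
    rw [Matrix.det_fin_two, hD00, hD01, hD10, hD11]
    have hnn : ∀ i : Fin (N-1), (0:ℝ) ≤ m i / ‖a i - aN‖ ^ 5 := fun i =>
      div_nonneg (hm i).le (pow_nonneg (hr i).le 5)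
    have hcs := Finset.sum_mul_sq_le_sq_mul_sq Finset.univ
      (fun i => Real.sqrt (m i / ‖a i - aN‖ ^ 5) * (a i - aN) 0)
      (fun i => Real.sqrt (m i / ‖a i - aN‖ ^ 5))
    have e1 : ∀ i : Fin (N-1), Real.sqrt (m i / ‖a i - aN‖ ^ 5) * (a i - aN) 0
        * Real.sqrt (m i / ‖a i - aN‖ ^ 5) = (m i / ‖a i - aN‖ ^ 5) * (a i - aN) 0 := by
      intro i
      rw [mul_comm, ← mul_assoc, Real.mul_self_sqrt (hnn i)]
    have e2 : ∀ i : Fin (N-1), (Real.sqrt (m i / ‖a i - aN‖ ^ 5) * (a i - aN) 0) ^ 2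
        = (m i / ‖a i - aN‖ ^ 5) * ((a i - aN) 0) ^ 2 := by
      intro i
      rw [mul_pow, Real.sq_sqrt (hnn i)]
    have e3 : ∀ i : Fin (N-1), (Real.sqrt (m i / ‖a i - aN‖ ^ 5)) ^ 2
        = m i / ‖a i - aN‖ ^ 5 := fun i => Real.sq_sqrt (hnn i)
    simp_rw [e1, e2, e3] at hcs
    have h1 : (0:ℝ) ≤ (3 / μ) ^ 2 * (aN 1) ^ 2 := by positivity
    nlinarith [mul_nonneg h1 (sub_nonneg.mpr hcs)]
  -- eigenvalues
  refine ⟨hsymm, htrace, hdet, ?_⟩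
  have hdisc : 0 ≤ 9 - 4 * D.det := by
    have h3 : D 0 0 + D 1 1 = 3 := by rw [← Matrix.trace_fin_two D]; exact htrace
    have h4 : D.det = D 0 0 * D 1 1 - D 0 1 * D 0 1 := by
      rw [Matrix.det_fin_two, hD01, hD10]
    nlinarith [sq_nonneg (D 0 0 - D 1 1), sq_nonneg (D 0 1)]
  set s := Real.sqrt (9 - 4 * D.det) with hs
  have hs3 : s ≤ 3 := by
    rw [hs, show (3:ℝ) = Real.sqrt 9 by
      rw [show (9:ℝ) = 3 ^ 2 by norm_num, Real.sqrt_sq (by norm_num)]]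
    exact Real.sqrt_le_sqrt (by linarith)
  have hs0 : 0 ≤ s := Real.sqrt_nonneg _
  refine ⟨(3 + s) / 2, (3 - s) / 2, ?_, by linarith, by linarith, by ring⟩
  have hsq : s ^ 2 = 9 - 4 * D.det := Real.sq_sqrt hdisc
  have hprod : (3 + s) / 2 * ((3 - s) / 2) = D.det := by nlinarith [hsq]
  rw [charpoly_fin_two', htrace]
  have hC3 : (Polynomial.C (3:ℝ))
      = Polynomial.C ((3 + s) / 2) + Polynomial.C ((3 - s) / 2) := by
    rw [← map_add]; congr 1; ring
  have hCd : (Polynomial.C D.det)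
      = Polynomial.C ((3 + s) / 2) * Polynomial.C ((3 - s) / 2) := by
    rw [← map_mul, hprod]
  rw [hC3, hCd]
  ring
end

section
/- Fix an integer N ≥ 2, masses m₁,…,m_{N−1} > 0, points a₁,…,a_N in ℝ² with aᵢ ≠ a_N for all 1 ≤ i ≤ N−1, and a real number μ > 0. Assume the Euler–Moulton setting: the second coordinate of aᵢ is 0 for all 1 ≤ i ≤ N−1, the second coordinate of a_N is nonzero, and the central configuration equation ∑_{j=1}^{N−1} mⱼ (aⱼ − a_N)/|aⱼ − a_N|³ = −μ·a_N holds. Define D = I₂ − (1/μ)(∑_{i=1}^{N−1} mᵢ/|aᵢ − a_N|³)·I₂ + (3/μ)·∑_{i=1}^{N−1} mᵢ (aᵢ − a_N)(aᵢ − a_N)ᵀ/|aᵢ − a_N|⁵. Then D = (3/μ)·∑_{j=1}^{N−1} mⱼ (aⱼ − a_N)(aⱼ − a_N)ᵀ/|aⱼ − a_N|⁵, and writing (x_{Nj}, y_{Nj}) = a_N − aⱼ and r_{Nj} = |a_N − aⱼ|, one has the Cauchy–Schwarz inequality (∑_{j=1}^{N−1} mⱼ x_{Nj} y_{Nj}/r_{Nj}⁵)²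 ≤ (∑_{j=1}^{N−1} mⱼ x_{Nj}²/r_{Nj}⁵)·(∑_{j=1}^{N−1} mⱼ y_{Nj}²/r_{Nj}⁵), hence det(D) ≥ 0. -/
/-- in the Euler–Moulton setting, the central-configuration matrix satisfies
`D = (3/μ)·∑ mⱼ (aⱼ − a_N)(aⱼ − a_N)ᵀ/|aⱼ − a_N|⁵`, the Cauchy–Schwarz inequality
`(∑ mⱼ x_{Nj} y_{Nj}/r_{Nj}⁵)² ≤ (∑ mⱼ x_{Nj}²/r_{Nj}⁵)(∑ mⱼ y_{Nj}²/r_{Nj}⁵)` holds for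
`(x_{Nj}, y_{Nj}) = a_N − aⱼ` and `r_{Nj} = |a_N − aⱼ|`, and hence `det D ≥ 0`. -/
theorem statement6 (N : ℕ) (hN : 2 ≤ N)
    (m : Fin (N - 1) → ℝ) (hm : ∀ i, 0 < m i)
    (a : Fin (N - 1) → EuclideanSpace ℝ (Fin 2)) (aN : EuclideanSpace ℝ (Fin 2))
    (ha : ∀ i, a i ≠ aN)
    (μ : ℝ) (hμ : 0 < μ)
    (hline : ∀ i, a i 1 = 0) (hoff : aN 1 ≠ 0)
    (hcc : ∑ j, (m j / ‖a j - aN‖ ^ 3) • (a j - aN) = -μ • aN)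
    (D : Matrix (Fin 2) (Fin 2) ℝ)
    (hD : D = 1 - ((1 / μ) * ∑ i, m i / ‖a i - aN‖ ^ 3) • (1 : Matrix (Fin 2) (Fin 2) ℝ)
        + (3 / μ) • ∑ i, (m i / ‖a i - aN‖ ^ 5) • outer (a i - aN)) :
    D = (3 / μ) • ∑ j, (m j / ‖a j - aN‖ ^ 5) • outer (a j - aN) ∧
      (∑ j, m j * (aN - a j) 0 * (aN - a j) 1 / ‖aN - a j‖ ^ 5) ^ 2 ≤
        (∑ j, m j * (aN - a j) 0 ^ 2 / ‖aN - a j‖ ^ 5) *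
          (∑ j, m j * (aN - a j) 1 ^ 2 / ‖aN - a j‖ ^ 5) ∧
      0 ≤ D.det := by
  have hsum : ∑ j, m j / ‖a j - aN‖ ^ 3 = μ := by
    have h1 := congrArg (EuclideanSpace.proj (1 : Fin 2)) hcc
    simp only [map_sum, map_smul, PiLp.proj_apply, PiLp.smul_apply,
      PiLp.sub_apply, smul_eq_mul, zero_sub, PiLp.neg_apply, neg_smul] at h1
    have h1' : ∑ x, (m x / ‖a x - aN‖ ^ 3) * (0 - aN 1) = -(μ * aN 1) := by
      rw [← h1]
      exact Finset.sum_congr rfl fun x _ => by rw [hline x]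
    rw [← Finset.sum_mul] at h1'
    have h2 : (∑ j, m j / ‖a j - aN‖ ^ 3) * aN 1 = μ * aN 1 := by
      linear_combination -h1'
    exact mul_right_cancel₀ hoff h2
  have hD2 : D = (3 / μ) • ∑ j, (m j / ‖a j - aN‖ ^ 5) • outer (a j - aN) := by
    rw [hD, hsum, one_div, inv_mul_cancel₀ hμ.ne', one_smul, sub_self, zero_add]
  -- Cauchy–Schwarz part
  have hw : ∀ j, 0 ≤ m j / ‖aN - a j‖ ^ 5 := fun j =>
    div_nonneg (hm j).le (pow_nonneg (norm_nonneg _) 5)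
  have hCS : (∑ j, m j * (aN - a j) 0 * (aN - a j) 1 / ‖aN - a j‖ ^ 5) ^ 2 ≤
      (∑ j, m j * (aN - a j) 0 ^ 2 / ‖aN - a j‖ ^ 5) *
        (∑ j, m j * (aN - a j) 1 ^ 2 / ‖aN - a j‖ ^ 5) := by
    have key := Finset.sum_mul_sq_le_sq_mul_sq Finset.univ
      (fun j => Real.sqrt (m j / ‖aN - a j‖ ^ 5) * (aN - a j) 0)
      (fun j => Real.sqrt (m j / ‖aN - a j‖ ^ 5) * (aN - a j) 1)
    have e1 : ∀ j : Fin (N - 1),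
        (Real.sqrt (m j / ‖aN - a j‖ ^ 5) * (aN - a j) 0) *
          (Real.sqrt (m j / ‖aN - a j‖ ^ 5) * (aN - a j) 1) =
        m j * (aN - a j) 0 * (aN - a j) 1 / ‖aN - a j‖ ^ 5 := by
      intro j
      rw [mul_mul_mul_comm, Real.mul_self_sqrt (hw j)]; ring
    have e2 : ∀ j : Fin (N - 1),
        (Real.sqrt (m j / ‖aN - a j‖ ^ 5) * (aN - a j) 0) ^ 2 =
        m j * (aN - a j) 0 ^ 2 / ‖aN - a j‖ ^ 5 := by
      intro j
      rw [mul_pow, Real.sq_sqrt (hw j)]; ring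
    have e3 : ∀ j : Fin (N - 1),
        (Real.sqrt (m j / ‖aN - a j‖ ^ 5) * (aN - a j) 1) ^ 2 =
        m j * (aN - a j) 1 ^ 2 / ‖aN - a j‖ ^ 5 := by
      intro j
      rw [mul_pow, Real.sq_sqrt (hw j)]; ring
    simpa only [e1, e2, e3] using key
  refine ⟨hD2, hCS, ?_⟩
  -- determinant
  set S : Matrix (Fin 2) (Fin 2) ℝ := ∑ j, (m j / ‖a j - aN‖ ^ 5) • outer (a j - aN) with hS
  have hSentry : ∀ p q, S p q = ∑ j, (m j / ‖aN - a j‖ ^ 5) * ((aN - a j) p * (aN - a j) q) := by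
    intro p q
    rw [hS]
    rw [Matrix.sum_apply]
    refine Finset.sum_congr rfl fun j _ => ?_
    have hn : ‖a j - aN‖ = ‖aN - a j‖ := norm_sub_rev _ _
    have hp : (a j - aN) p = -((aN - a j) p) := by
      simp [PiLp.sub_apply]
    have hq : (a j - aN) q = -((aN - a j) q) := by
      simp [PiLp.sub_apply]
    rw [Matrix.smul_apply]
    simp only [outer, Matrix.of_apply, smul_eq_mul]
    rw [hn, hp, hq]; ring
  have hdetS : 0 ≤ S.det := by
    rw [Matrix.det_fin_two, hSentry 0 0, hSentry 1 1, hSentry 0 1, hSentry 1 0]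
    have key : (∑ j, (m j / ‖aN - a j‖ ^ 5) * ((aN - a j) 0 * (aN - a j) 1)) ^ 2 ≤
        (∑ j, (m j / ‖aN - a j‖ ^ 5) * ((aN - a j) 0 * (aN - a j) 0)) *
          (∑ j, (m j / ‖aN - a j‖ ^ 5) * ((aN - a j) 1 * (aN - a j) 1)) := by
      have e : ∀ (p q : Fin 2),
          (∑ j, (m j / ‖aN - a j‖ ^ 5) * ((aN - a j) p * (aN - a j) q)) =
          ∑ j, m j * (aN - a j) p * (aN - a j) q / ‖aN - a j‖ ^ 5 := by
        intro p q; refine Finset.sum_congr rfl fun j _ => by ring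
      rw [e 0 1, e 0 0, e 1 1]
      have e0 : (∑ j, m j * (aN - a j) 0 * (aN - a j) 0 / ‖aN - a j‖ ^ 5) =
          ∑ j, m j * (aN - a j) 0 ^ 2 / ‖aN - a j‖ ^ 5 :=
        Finset.sum_congr rfl fun j _ => by ring
      have e1 : (∑ j, m j * (aN - a j) 1 * (aN - a j) 1 / ‖aN - a j‖ ^ 5) =
          ∑ j, m j * (aN - a j) 1 ^ 2 / ‖aN - a j‖ ^ 5 :=
        Finset.sum_congr rfl fun j _ => by ring
      rw [e0, e1]; exact hCS
    have hsym : (∑ j, (m j / ‖aN - a j‖ ^ 5) * ((aN - a j) 1 * (aN - a j) 0)) =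
        ∑ j, (m j / ‖aN - a j‖ ^ 5) * ((aN - a j) 0 * (aN - a j) 1) :=
      Finset.sum_congr rfl fun j _ => by ring
    rw [hsym]
    nlinarith [key]
  rw [hD2, Matrix.det_smul]
  have : (0:ℝ) ≤ (3 / μ) ^ Fintype.card (Fin 2) := by positivity
  exact mul_nonneg this hdetS
end

section
/- Let m₂ ∈ [0, 1] and let y > 0 satisfy the mass-constraint equation (1 − m₂)/(y² + 1)^{3/2} + m₂/y³ = (1 + 7m₂)/8. Then 1 ≤ y ≤ √3. -/
/-- helper -/
lemma rpow_three_halves (x : ℝ) (hx : 0 ≤ x) :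
    x ^ ((3 : ℝ) / 2) = Real.sqrt x ^ 3 := by
  rw [show (3 : ℝ) / 2 = (1 / 2) * 3 by ring, Real.rpow_mul hx,
    ← Real.sqrt_eq_rpow, show (3 : ℝ) = ((3 : ℕ) : ℝ) by norm_num,
    Real.rpow_natCast]

/-- for `m₂ ∈ [0,1]`, any `y > 0` satisfying the mass-constraint equation
`(1 − m₂)/(y² + 1)^{3/2} + m₂/y³ = (1 + 7m₂)/8` satisfies `1 ≤ y ≤ √3`. -/
theorem statement9 (m₂ : ℝ) (hm : m₂ ∈ Set.Icc (0 : ℝ) 1) (y : ℝ) (hy : 0 < y)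
    (heq : (1 - m₂) / (y ^ 2 + 1) ^ ((3 : ℝ) / 2) + m₂ / y ^ 3 = (1 + 7 * m₂) / 8) :
    1 ≤ y ∧ y ≤ Real.sqrt 3 := by
  obtain ⟨hm0, hm1⟩ := hm
  have hx : (0:ℝ) ≤ y ^ 2 + 1 := by positivity
  rw [rpow_three_halves _ hx] at heq
  set s := Real.sqrt (y ^ 2 + 1) with hs
  have hs0 : 0 ≤ s := Real.sqrt_nonneg _
  have hs2 : s ^ 2 = y ^ 2 + 1 := Real.sq_sqrt hx
  have hspos : 0 < s := by nlinarith
  have hy3 : 0 < y ^ 3 := by positivity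
  have hs3 : 0 < s ^ 3 := by positivity
  rcases eq_or_lt_of_le hm0 with hm0' | hm0'
  · -- m₂ = 0
    subst hm0'
    have h8 : s ^ 3 = 8 := by
      field_simp at heq
      have h := mul_right_cancel₀ hy3.ne' (show 8 * y ^ 3 = s ^ 3 * y ^ 3 by linarith)
      linarith
    have hseq : s = 2 := by nlinarith [sq_nonneg (s - 2), sq_nonneg (s + 2)]
    have hy2 : y ^ 2 = 3 := by nlinarith
    have hyv : y = Real.sqrt 3 := by
      rw [show (3:ℝ) = y ^ 2 from hy2.symm, Real.sqrt_sq hy.le]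
    constructor
    · rw [hyv]; nlinarith [Real.sq_sqrt (show (0:ℝ) ≤ 3 by norm_num),
        Real.sqrt_nonneg (3:ℝ)]
    · rw [hyv]
  · by_contra hcon
    push_neg at hcon
    by_cases h1 : 1 ≤ y
    · -- then √3 < y
      have h3 : Real.sqrt 3 < y := hcon h1
      have hsq3 : Real.sqrt 3 ^ 2 = 3 := Real.sq_sqrt (by norm_num)
      have hy2 : 3 < y ^ 2 := by nlinarith [Real.sqrt_nonneg (3:ℝ)]
      have hsgt : 2 < s := by nlinarith
      have hs8 : 8 < s ^ 3 := by nlinarith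
      have hb1 : (1 - m₂) / s ^ 3 ≤ (1 - m₂) / 8 := by
        gcongr
      have hygt1 : 1 < y ^ 3 := by nlinarith
      have hb2 : m₂ / y ^ 3 < m₂ := by
        rw [div_lt_iff₀ hy3]; nlinarith
      linarith
    · push_neg at h1
      have hs2' : s < 2 := by nlinarith
      have hslt : s ^ 3 ≤ 8 := by nlinarith
      have hb1 : (1 - m₂) / 8 ≤ (1 - m₂) / s ^ 3 := by
        gcongr
      have hylt1 : y ^ 3 < 1 := by nlinarith
      have hb2 : m₂ < m₂ / y ^ 3 := by
        rw [lt_div_iff₀ hy3]; nlinarith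
      linarith
end

section
/- Let 0 ≤ m₂ < m₂' ≤ 1, and suppose y > 0 satisfies (1 − m₂)/(y² + 1)^{3/2} + m₂/y³ = (1 + 7m₂)/8 and y' > 0 satisfies (1 − m₂')/(y'² + 1)^{3/2} + m₂'/y'³ = (1 + 7m₂')/8. Then y' < y. -/
/-- the scaled height determined by the mass-constraint equation
`(1 − m₂)/(y² + 1)^{3/2} + m₂/y³ = (1 + 7m₂)/8` is strictly decreasing in `m₂`. -/
theorem statement11 (m₂ m₂' : ℝ) (h0 : 0 ≤ m₂) (hlt : m₂ < m₂') (h1 : m₂' ≤ 1)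
    (y y' : ℝ) (hy : 0 < y) (hy' : 0 < y')
    (heq : (1 - m₂) / (y ^ 2 + 1) ^ ((3 : ℝ) / 2) + m₂ / y ^ 3 = (1 + 7 * m₂) / 8)
    (heq' : (1 - m₂') / (y' ^ 2 + 1) ^ ((3 : ℝ) / 2) + m₂' / y' ^ 3 = (1 + 7 * m₂') / 8) :
    y' < y := by
  by_contra hcon
  push_neg at hcon
  set Y : ℝ := (y ^ 2 + 1) ^ ((3 : ℝ) / 2) with hYdef
  set Y' : ℝ := (y' ^ 2 + 1) ^ ((3 : ℝ) / 2) with hY'def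
  have hYpos : 0 < Y := Real.rpow_pos_of_pos (by positivity) _
  have hY'pos : 0 < Y' := Real.rpow_pos_of_pos (by positivity) _
  have hYY' : Y ≤ Y' := by
    apply Real.rpow_le_rpow (by positivity) (by nlinarith) (by norm_num)
  have hy3 : (0:ℝ) < y ^ 3 := by positivity
  have hy3le : y ^ 3 ≤ y' ^ 3 := pow_le_pow_left₀ hy.le hcon 3
  have hmm : 0 < m₂' - m₂ := by linarith
  -- F(m₂', y) ≥ 0
  have hge : (1 + 7 * m₂') / 8 ≤ (1 - m₂') / Y + m₂' / y ^ 3 := by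
    calc (1 + 7 * m₂') / 8 = (1 - m₂') / Y' + m₂' / y' ^ 3 := heq'.symm
    _ ≤ (1 - m₂') / Y + m₂' / y ^ 3 := by
        gcongr <;> linarith
  -- hence g(y) ≥ 0
  have key : 0 ≤ (m₂' - m₂) * (1 / y ^ 3 - 1 / Y - 7 / 8) := by
    have hid : (m₂' - m₂) * (1 / y ^ 3 - 1 / Y - 7 / 8)
        = ((1 - m₂') / Y + m₂' / y ^ 3 - (1 + 7 * m₂') / 8)
          - ((1 - m₂) / Y + m₂ / y ^ 3 - (1 + 7 * m₂) / 8) := by ring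
    rw [hid]
    linarith [heq, hge]
  have hg : 0 ≤ 1 / y ^ 3 - 1 / Y - 7 / 8 := by
    by_contra h
    push_neg at h
    nlinarith [key]
  -- the constraint at (m₂, y) forces 1/Y ≤ 1/8
  have hA : 1 / Y - 1 / 8 + m₂ * (1 / y ^ 3 - 1 / Y - 7 / 8) = 0 := by
    have hid : 1 / Y - 1 / 8 + m₂ * (1 / y ^ 3 - 1 / Y - 7 / 8)
        = (1 - m₂) / Y + m₂ / y ^ 3 - (1 + 7 * m₂) / 8 := by ring
    rw [hid, heq]; ring
  have hY8 : (8:ℝ) ≤ Y := by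
    have h18 : 1 / Y ≤ 1 / 8 := by nlinarith [mul_nonneg h0 hg]
    have hone : 1 / Y * Y = 1 := by field_simp
    nlinarith [h18, hYpos, hone]
  -- hence y² ≥ 3
  have h48 : (4:ℝ) ^ ((3 : ℝ) / 2) = 8 := by
    rw [show (4:ℝ) = 2 ^ (2:ℝ) by norm_num [Real.rpow_two],
      ← Real.rpow_mul (by norm_num)]
    norm_num
  have hy2 : 3 ≤ y ^ 2 := by
    by_contra h
    push_neg at h
    have : Y < 8 := by
      rw [hYdef, ← h48]
      exact Real.rpow_lt_rpow (by positivity) (by linarith) (by norm_num)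
    linarith
  -- final contradiction: y³ ≥ 3 so 1/y³ ≤ 1/3 < 7/8
  have hy1 : 1 ≤ y := by
    by_contra h
    push_neg at h
    have h2 := mul_lt_mul_of_pos_left h hy
    have e : y * y = y ^ 2 := by ring
    linarith
  have hy33 : (3:ℝ) ≤ y ^ 3 := by
    have h := mul_le_mul hy1 hy2 (by norm_num) hy.le
    have e : 1 * 3 = (3:ℝ) := by norm_num
    have e2 : y * y ^ 2 = y ^ 3 := by ring
    linarith
  have h13 : 1 / y ^ 3 ≤ 1 / 3 := by
    apply one_div_le_one_div_of_le (by norm_num) hy33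
  have hYinv : 0 < 1 / Y := by positivity
  linarith [hg]
end

section
/- Let m₂ ∈ (0, 1), set m₁ = m₃ = (1 − m₂)/2, and let y > 0 satisfy the mass-constraint equation (1 − m₂)/(y² + 1)^{3/2} + m₂/y³ = (1 + 7m₂)/8. Put a₁ = (−(1 − m₂)^{−1/2}, 0), a₂ = (0, 0), a₃ = ((1 − m₂)^{−1/2}, 0), a₄ = (0, y·(1 − m₂)^{−1/2}) in ℝ². Define μ = ∑_{j=1}^{3} mⱼ/|aⱼ − a₄|³ and D = (3/μ)·∑_{j=1}^{3} mⱼ (aⱼ − a₄)(aⱼ − a₄)ᵀ/|aⱼ − a₄|⁵. Then D = 3·[[z, 0], [0, 1 − z]] with z = 8(1 − m₂)/((1 + 7m₂)(y² + 1)^{5/2}). -/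
set_option maxHeartbeats 2000000


/-- The point of `ℝ²` with coordinates `(x, y)`. -/
noncomputable def vec2 (x y : ℝ) : EuclideanSpace ℝ (Fin 2) :=
  (WithLp.equiv 2 (Fin 2 → ℝ)).symm ![x, y]

lemma vec2_sub (a b c d : ℝ) : vec2 a b - vec2 c d = vec2 (a - c) (b - d) := by
  ext i; fin_cases i <;> rfl

lemma vec2_apply0 (x y : ℝ) : vec2 x y 0 = x := rfl
lemma vec2_apply1 (x y : ℝ) : vec2 x y 1 = y := rfl

lemma outer_vec2 (x y : ℝ) : outer (vec2 x y) = !![x * x, x * y; y * x, y * y] := by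
  ext p r; fin_cases p <;> fin_cases r <;> rfl

lemma norm_vec2 (x y : ℝ) : ‖vec2 x y‖ = Real.sqrt (x ^ 2 + y ^ 2) := by
  rw [EuclideanSpace.norm_eq]
  congr 1
  rw [Fin.sum_univ_two]
  simp [vec2, sq_abs]

/-- in the symmetric restricted four-body problem with primaries
`a₁ = (−(1−m₂)^{−1/2}, 0)`, `a₂ = (0,0)`, `a₃ = ((1−m₂)^{−1/2}, 0)` of masses
`(1−m₂)/2, m₂, (1−m₂)/2` and massless body at `a₄ = (0, y(1−m₂)^{−1/2})`, with
`μ = ∑ mⱼ/|aⱼ − a₄|³` and `D = (3/μ)∑ mⱼ (aⱼ − a₄)(aⱼ − a₄)ᵀ/|aⱼ − a₄|⁵`, one has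
`D = 3·[[z, 0], [0, 1 − z]]` where `z = 8(1 − m₂)/((1 + 7m₂)(y² + 1)^{5/2})`. -/
theorem statement12 (m₂ : ℝ) (hm : m₂ ∈ Set.Ioo (0 : ℝ) 1)
    (y : ℝ) (hy : 0 < y)
    (heq : (1 - m₂) / (y ^ 2 + 1) ^ ((3 : ℝ) / 2) + m₂ / y ^ 3 = (1 + 7 * m₂) / 8)
    (m : Fin 3 → ℝ)
    (hm1 : m 0 = (1 - m₂) / 2) (hm2 : m 1 = m₂) (hm3 : m 2 = (1 - m₂) / 2)
    (a : Fin 3 → EuclideanSpace ℝ (Fin 2)) (a₄ : EuclideanSpace ℝ (Fin 2))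
    (ha1 : a 0 = vec2 (-((1 - m₂) ^ (-(1 : ℝ) / 2))) 0)
    (ha2 : a 1 = vec2 0 0)
    (ha3 : a 2 = vec2 ((1 - m₂) ^ (-(1 : ℝ) / 2)) 0)
    (ha4 : a₄ = vec2 0 (y * (1 - m₂) ^ (-(1 : ℝ) / 2)))
    (μ : ℝ) (hμ : μ = ∑ j, m j / ‖a j - a₄‖ ^ 3)
    (D : Matrix (Fin 2) (Fin 2) ℝ)
    (hD : D = (3 / μ) • ∑ j, (m j / ‖a j - a₄‖ ^ 5) • outer (a j - a₄))
    (z : ℝ) (hz : z = 8 * (1 - m₂) / ((1 + 7 * m₂) * (y ^ 2 + 1) ^ ((5 : ℝ) / 2))) :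
    D = (3 : ℝ) • !![z, 0; 0, 1 - z] := by
  obtain ⟨hm0, hm1'⟩ := hm
  have hc : (0 : ℝ) < 1 - m₂ := by linarith
  have hA : (0 : ℝ) < y ^ 2 + 1 := by positivity
  set t := Real.sqrt (1 - m₂) with htdef
  have ht : 0 < t := Real.sqrt_pos.mpr hc
  have ht2 : t ^ 2 = 1 - m₂ := Real.sq_sqrt hc.le
  set q := Real.sqrt (y ^ 2 + 1) with hqdef
  have hq : 0 < q := Real.sqrt_pos.mpr hA
  have hq2 : q ^ 2 = y ^ 2 + 1 := Real.sq_sqrt hA.le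
  have hs : (1 - m₂) ^ (-(1 : ℝ) / 2) = t⁻¹ := by
    rw [show (-(1 : ℝ) / 2) = -(1 / 2) by ring, Real.rpow_neg hc.le, ← Real.sqrt_eq_rpow]
  have hA32 : (y ^ 2 + 1) ^ ((3 : ℝ) / 2) = q ^ 3 := by
    rw [show ((3 : ℝ) / 2) = (1 / 2) * 3 by ring, Real.rpow_mul hA.le, ← Real.sqrt_eq_rpow,
      show ((3 : ℝ)) = ((3 : ℕ) : ℝ) by norm_num, Real.rpow_natCast]
  have hA52 : (y ^ 2 + 1) ^ ((5 : ℝ) / 2) = q ^ 5 := by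
    rw [show ((5 : ℝ) / 2) = (1 / 2) * 5 by ring, Real.rpow_mul hA.le, ← Real.sqrt_eq_rpow,
      show ((5 : ℝ)) = ((5 : ℕ) : ℝ) by norm_num, Real.rpow_natCast]
  rw [hs] at ha1 ha3 ha4
  rw [hA32] at heq
  rw [hA52] at hz
  have hb1 : a 0 - a₄ = vec2 (-t⁻¹ - 0) (0 - y * t⁻¹) := by rw [ha1, ha4, vec2_sub]
  have hb2 : a 1 - a₄ = vec2 (0 - 0) (0 - y * t⁻¹) := by rw [ha2, ha4, vec2_sub]
  have hb3 : a 2 - a₄ = vec2 (t⁻¹ - 0) (0 - y * t⁻¹) := by rw [ha3, ha4, vec2_sub]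
  have n1 : ‖a 0 - a₄‖ = q / t := by
    rw [hb1, norm_vec2]
    rw [show (-t⁻¹ - 0) ^ 2 + (0 - y * t⁻¹) ^ 2 = (q / t) ^ 2 by
      rw [div_pow, hq2]; ring]
    exact Real.sqrt_sq (by positivity)
  have n2 : ‖a 1 - a₄‖ = y / t := by
    rw [hb2, norm_vec2]
    rw [show (0 - 0 : ℝ) ^ 2 + (0 - y * t⁻¹) ^ 2 = (y / t) ^ 2 by rw [div_pow]; ring]
    exact Real.sqrt_sq (by positivity)
  have n3 : ‖a 2 - a₄‖ = q / t := by
    rw [hb3, norm_vec2]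
    rw [show (t⁻¹ - 0) ^ 2 + (0 - y * t⁻¹) ^ 2 = (q / t) ^ 2 by
      rw [div_pow, hq2]; ring]
    exact Real.sqrt_sq (by positivity)
  have h7 : (0 : ℝ) < 1 + 7 * m₂ := by linarith
  have hyne : y ≠ 0 := hy.ne'
  have hqne : q ≠ 0 := hq.ne'
  have htne : t ≠ 0 := ht.ne'
  have h7ne : (1 + 7 * m₂ : ℝ) ≠ 0 := h7.ne'
  have e1 : (1 - m₂) / 2 / (q / t) ^ 3 + m₂ / (y / t) ^ 3 + (1 - m₂) / 2 / (q / t) ^ 3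
      = t ^ 3 * ((1 - m₂) / q ^ 3 + m₂ / y ^ 3) := by
    rw [div_pow, div_pow]; field_simp; ring
  have hμval : μ = t ^ 3 * (1 + 7 * m₂) / 8 := by
    rw [hμ, Fin.sum_univ_three, hm1, hm2, hm3, n1, n2, n3, e1, heq]; ring
  have heqc : 8 * (1 - m₂) * y ^ 3 + 8 * m₂ * q ^ 3 = (1 + 7 * m₂) * (q ^ 3 * y ^ 3) := by
    field_simp at heq
    linarith
  have hμpos : 0 < μ := by rw [hμval]; positivity
  have hμne : μ ≠ 0 := hμpos.ne'
  rw [hD, hμval, Fin.sum_univ_three, hm1, hm2, hm3, n1, n2, n3, hb1, hb2, hb3,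
    outer_vec2, outer_vec2, outer_vec2, hz]
  ext p r
  fin_cases p <;> fin_cases r <;>
    simp only [Matrix.smul_apply, Matrix.add_apply, smul_eq_mul, Matrix.cons_val',
      Matrix.cons_val_zero, Matrix.cons_val_one, Matrix.head_cons, Matrix.head_fin_const,
      Matrix.empty_val', Matrix.cons_val_fin_one, Matrix.of_apply, Fin.zero_eta, Fin.mk_one]
  · field_simp
    ring
  · field_simp
    ring
  · field_simp
    ring
  · field_simp
    linear_combination 2 * y ^ 2 * q ^ 2 * heqc -
      16 * (1 - m₂) * y ^ 5 * hq2
end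

section
/- Let n ≥ 2 be an integer, m > 0, m₀ ≥ 0, and set α = (n·m)^{−1/2} and ωⱼ = e^{−2π√−1·j/n} ∈ ℂ for j = 1, …, n. Define μ = ∑_{1 ≤ i < j ≤ n} m²/(α·|ωᵢ − ωⱼ|) + ∑_{i=1}^{n} m·m₀/(α·|ωᵢ|). Then μ·α³ = m₀ + (m/4)·∑_{j=1}^{n−1} 1/sin(jπ/n). -/
open Finset

lemma aux_abs_exp_sub_exp (a b : ℝ) :
    ‖Complex.exp ((a:ℂ) * Complex.I) - Complex.exp ((b:ℂ) * Complex.I)‖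
      = 2 * |Real.sin ((a - b) / 2)| := by
  rw [Complex.norm_def, Complex.normSq_apply]
  simp only [Complex.sub_re, Complex.sub_im, Complex.exp_ofReal_mul_I_re,
    Complex.exp_ofReal_mul_I_im]
  have hc : Real.cos (a - b) = Real.cos a * Real.cos b + Real.sin a * Real.sin b :=
    Real.cos_sub a b
  have hs : Real.sin ((a - b) / 2) ^ 2 = (1 - Real.cos (a - b)) / 2 := by
    have h2x : 2 * ((a - b) / 2) = a - b := by ring
    have hq := Real.cos_sq ((a - b) / 2)
    rw [h2x] at hq
    have hsc := Real.sin_sq_add_cos_sq ((a - b) / 2)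
    linarith
  have habs : |Real.sin ((a-b)/2)| ^ 2 = Real.sin ((a-b)/2) ^ 2 := sq_abs _
  have hpa : Real.sin a ^ 2 + Real.cos a ^ 2 = 1 := Real.sin_sq_add_cos_sq a
  have hpb : Real.sin b ^ 2 + Real.cos b ^ 2 = 1 := Real.sin_sq_add_cos_sq b
  have h1 : (Real.cos a - Real.cos b) * (Real.cos a - Real.cos b)
      + (Real.sin a - Real.sin b) * (Real.sin a - Real.sin b)
      = (2 * |Real.sin ((a - b) / 2)|) ^ 2 := by nlinarith
  rw [h1, Real.sqrt_sq (by positivity)]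

lemma aux_count (n : ℕ) (g : ℕ → ℝ) :
    (∑ i ∈ Icc 1 n, ∑ j ∈ Icc 1 n, if i < j then g (j - i) else 0)
      = ∑ d ∈ Icc 1 (n-1), ((n - d : ℕ) : ℝ) * g d := by
  have h1 : ∀ i, (∑ j ∈ Icc 1 n, if i < j then g (j - i) else 0)
      = ∑ j ∈ (Icc 1 n).filter (fun j => i < j), g (j - i) :=
    fun i => (Finset.sum_filter _ _).symm
  simp_rw [h1]
  have h2 : ∀ d ∈ Icc 1 (n-1), ((n - d : ℕ):ℝ) * g d = ∑ _i ∈ Icc 1 (n - d), g d := by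
    intro d _; rw [Finset.sum_const, Nat.card_Icc]; simp [nsmul_eq_mul]
  rw [Finset.sum_congr rfl h2]
  rw [Finset.sum_sigma' (Icc 1 n) (fun i => (Icc 1 n).filter (fun j => i < j))
    (fun i j => g (j - i))]
  rw [Finset.sum_sigma' (Icc 1 (n-1)) (fun d => Icc 1 (n - d)) (fun d _i => g d)]
  refine Finset.sum_nbij' (i := fun p => ⟨p.2 - p.1, p.1⟩) (j := fun q => ⟨q.2, q.2 + q.1⟩)
    ?_ ?_ ?_ ?_ ?_
  · intro p hp
    simp only [Finset.mem_sigma, Finset.mem_filter, Finset.mem_Icc] at hp ⊢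
    omega
  · intro q hq
    simp only [Finset.mem_sigma, Finset.mem_filter, Finset.mem_Icc] at hq ⊢
    omega
  · intro p hp
    simp only [Finset.mem_sigma, Finset.mem_filter, Finset.mem_Icc] at hp
    ext <;> simp <;> omega
  · intro q hq
    simp only [Finset.mem_sigma, Finset.mem_filter, Finset.mem_Icc] at hq
    ext <;> simp <;> omega
  · intro p _; rfl

lemma aux_reflect (n : ℕ) (g : ℕ → ℝ) (hg : ∀ d ∈ Icc 1 (n-1), g (n - d) = g d) :
    ∑ d ∈ Icc 1 (n-1), ((n - d : ℕ) : ℝ) * g d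
      = ((n : ℝ) / 2) * ∑ d ∈ Icc 1 (n-1), g d := by
  have key : ∑ d ∈ Icc 1 (n-1), ((n - d : ℕ) : ℝ) * g d
      = ∑ d ∈ Icc 1 (n-1), (d : ℝ) * g d := by
    refine Finset.sum_nbij' (i := fun d => n - d) (j := fun d => n - d) ?_ ?_ ?_ ?_ ?_
    · intro a ha; simp only [Finset.mem_Icc] at *; omega
    · intro a ha; simp only [Finset.mem_Icc] at *; omega
    · intro a ha; simp only [Finset.mem_Icc] at ha; show n - (n - a) = a; omega
    · intro a ha; simp only [Finset.mem_Icc] at ha; show n - (n - a) = a; omega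
    · intro a ha
      simp only [Finset.mem_Icc] at ha
      show ((n - a : ℕ) : ℝ) * g a = ((n - a : ℕ) : ℝ) * g (n - a)
      rw [hg a (by simp only [Finset.mem_Icc]; omega)]
  have h2 : ∀ d ∈ Icc 1 (n-1), ((n - d : ℕ) : ℝ) = (n : ℝ) - d := by
    intro d hd; simp only [Finset.mem_Icc] at hd
    have : d ≤ n := by omega
    push_cast [Nat.cast_sub this]; ring
  have h3 : (∑ d ∈ Icc 1 (n-1), ((n - d : ℕ) : ℝ) * g d)
      + ∑ d ∈ Icc 1 (n-1), (d : ℝ) * g d = (n:ℝ) * ∑ d ∈ Icc 1 (n-1), g d := by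
    rw [← Finset.sum_add_distrib, Finset.mul_sum]
    refine Finset.sum_congr rfl fun d hd => ?_
    rw [h2 d hd]; ring
  linarith [key, h3]



/-- for the `(1+n)`-gon configuration (n equal masses `m` at the vertices
`α·ωⱼ` of a regular n-gon and a mass `m₀` at the center, with `α = (nm)^{−1/2}`), the
Newtonian potential `μ = ∑_{1≤i<j≤n} m²/(α|ωᵢ − ωⱼ|) + ∑ᵢ m·m₀/(α|ωᵢ|)` satisfies
`μ·α³ = m₀ + (m/4)·∑_{j=1}^{n−1} 1/sin(jπ/n)`. -/
theorem statement13 (n : ℕ) (hn : 2 ≤ n) (m m₀ : ℝ) (hm : 0 < m) (hm₀ : 0 ≤ m₀)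
    (α : ℝ) (hα : α = ((n : ℝ) * m) ^ (-(1 : ℝ) / 2))
    (ω : ℕ → ℂ)
    (hω : ∀ j, ω j = Complex.exp (-(2 * Real.pi * j / n) * Complex.I))
    (μ : ℝ)
    (hμ : μ = (∑ i ∈ Finset.Icc 1 n, ∑ j ∈ Finset.Icc 1 n,
        if i < j then m ^ 2 / (α * ‖ω i - ω j‖) else 0)
      + ∑ i ∈ Finset.Icc 1 n, m * m₀ / (α * ‖ω i‖)) :
    μ * α ^ 3 = m₀ + (m / 4) * ∑ j ∈ Finset.Icc 1 (n - 1),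
      1 / Real.sin (j * Real.pi / n) := by
  have hn0 : 0 < (n:ℝ) := by exact_mod_cast Nat.pos_of_ne_zero (by omega)
  have hnm : 0 < (n:ℝ) * m := by positivity
  have hαpos : 0 < α := by rw [hα]; exact Real.rpow_pos_of_pos hnm _
  have hα2 : α ^ 2 = ((n:ℝ) * m)⁻¹ := by
    rw [hα, ← Real.rpow_natCast (((n:ℝ)*m) ^ (-(1:ℝ)/2)) 2, ← Real.rpow_mul hnm.le]
    norm_num [Real.rpow_neg_one, mul_inv]
  set g : ℕ → ℝ := fun d => 1 / Real.sin ((d:ℝ) * Real.pi / (n:ℝ)) with hgdef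
  have hωform : ∀ j : ℕ, ω j = Complex.exp (((-(2*Real.pi*(j:ℝ)/n) : ℝ) : ℂ) * Complex.I) := by
    intro j; rw [hω j]; congr 1; push_cast; ring
  have habs1 : ∀ i : ℕ, ‖ω i‖ = 1 := by
    intro i; rw [hωform i]; exact Complex.norm_exp_ofReal_mul_I _
  have habs2 : ∀ i j : ℕ, i ∈ Finset.Icc 1 n → j ∈ Finset.Icc 1 n → i < j →
      ‖ω i - ω j‖ = 2 * Real.sin (((j - i : ℕ):ℝ) * Real.pi / n) := by
    intro i j hi hj hij
    simp only [Finset.mem_Icc] at hi hj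
    rw [hωform i, hωform j, aux_abs_exp_sub_exp]
    have hle : i ≤ j := le_of_lt hij
    have hsub : ((j - i : ℕ):ℝ) = (j:ℝ) - i := by push_cast [Nat.cast_sub hle]; ring
    have harg : (-(2*Real.pi*(i:ℝ)/n) - -(2*Real.pi*(j:ℝ)/n)) / 2
        = ((j - i:ℕ):ℝ) * Real.pi / n := by rw [hsub]; field_simp; ring
    rw [harg, abs_of_nonneg]
    apply Real.sin_nonneg_of_nonneg_of_le_pi
    · positivity
    · rw [hsub, div_le_iff₀ hn0]
      have hjn : (j:ℝ) - i ≤ n := by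
        have : j ≤ n := hj.2
        have : (j:ℝ) ≤ n := by exact_mod_cast this
        have hi0 : (0:ℝ) ≤ i := by positivity
        linarith
      nlinarith [Real.pi_pos]
  have hcenter : (∑ i ∈ Finset.Icc 1 n, m * m₀ / (α * ‖ω i‖))
      = (n:ℝ) * (m * m₀ / α) := by
    rw [Finset.sum_congr rfl (fun i _ => by rw [habs1 i, mul_one]), Finset.sum_const,
      Nat.card_Icc]
    simp [nsmul_eq_mul]
  have hpair : (∑ i ∈ Finset.Icc 1 n, ∑ j ∈ Finset.Icc 1 n,
      if i < j then m ^ 2 / (α * ‖ω i - ω j‖) else 0)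
      = (m^2/(α*2)) * ∑ i ∈ Finset.Icc 1 n, ∑ j ∈ Finset.Icc 1 n,
        (if i < j then g (j - i) else 0) := by
    rw [Finset.mul_sum]
    refine Finset.sum_congr rfl fun i hi => ?_
    rw [Finset.mul_sum]
    refine Finset.sum_congr rfl fun j hj => ?_
    by_cases hij : i < j
    · simp only [hij, if_true]
      rw [habs2 i j hi hj hij, hgdef]
      rw [show α * (2 * Real.sin (((j-i:ℕ):ℝ)*Real.pi/n))
        = (α*2) * Real.sin (((j-i:ℕ):ℝ)*Real.pi/n) by ring]
      rw [← div_div, div_eq_mul_one_div]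
    · simp [hij]
  have hgsymm : ∀ d ∈ Finset.Icc 1 (n-1), g (n - d) = g d := by
    intro d hd
    simp only [Finset.mem_Icc] at hd
    have hdn : d ≤ n := by omega
    simp only [hgdef]
    have h1 : ((n - d : ℕ):ℝ) = (n:ℝ) - d := by push_cast [Nat.cast_sub hdn]; ring
    rw [h1]
    have h2 : ((n:ℝ) - d) * Real.pi / n = Real.pi - (d:ℝ) * Real.pi / n := by
      field_simp
    rw [h2, Real.sin_pi_sub]
  have hSig : (∑ i ∈ Finset.Icc 1 n, ∑ j ∈ Finset.Icc 1 n, (if i < j then g (j - i) else 0))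
      = ((n:ℝ)/2) * ∑ d ∈ Finset.Icc 1 (n-1), g d := by
    rw [aux_count n g, aux_reflect n g hgsymm]
  rw [hμ, hcenter, hpair, hSig]
  have hα3 : α^3 = α * ((n:ℝ)*m)⁻¹ := by rw [show α^3 = α*α^2 by ring, hα2]
  rw [hα3, hgdef]
  have hαne : α ≠ 0 := ne_of_gt hαpos
  field_simp
  ring_nf
  refine congrArg (· * 4 + m₀ * 16) (congrArg (m * ·) (Finset.sum_congr rfl fun x _ => ?_))
  ring_nf
end

section
/- Let n ≥ 2 be an integer. For s ∈ (0, 1) define h_n(s) = (1/n)·∑_{j=1}^{n} (1 − s·cos(2jπ/n))/(1 + s² − 2s·cos(2jπ/n))^{3/2}, g_n(s) = (1/n)·∑_{j=1}^{n} (1 − s⁴·cos(2jπ/n))/(1 + s² − 2s·cos(2jπ/n))^{3/2}, and set h_n(1) = (1/(4n))·∑_{j=1}^{n−1} 1/sin(jπ/n). Then the limit as s → 1 from the left of (g_n(s) − h_n(1))/(h_n(s) − h_n(1)) exists and equals 4. -/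
open Filter Real Finset Topology Set

private lemma sq_rpow_three_halves {t : ℝ} (ht : 0 < t) :
    (t ^ 2 : ℝ) ^ ((3 : ℝ) / 2) = t ^ 3 := by
  rw [← Real.rpow_natCast t 2, ← Real.rpow_mul ht.le, ← Real.rpow_natCast t 3]
  norm_num

/-- with
`h_n(s) = (1/n)∑_{j=1}^{n} (1 − s·cos(2jπ/n))/(1 + s² − 2s·cos(2jπ/n))^{3/2}`,
`g_n(s) = (1/n)∑_{j=1}^{n} (1 − s⁴·cos(2jπ/n))/(1 + s² − 2s·cos(2jπ/n))^{3/2}` and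
`h_n(1) = (1/(4n))∑_{j=1}^{n−1} 1/sin(jπ/n)`, the limit of
`(g_n(s) − h_n(1))/(h_n(s) − h_n(1))` as `s → 1⁻` exists and equals `4`. -/
theorem statement17 (n : ℕ) (hn : 2 ≤ n)
    (h g : ℝ → ℝ)
    (hh : h = fun s => (1 / (n : ℝ)) * ∑ j ∈ Finset.Icc 1 n,
        (1 - s * Real.cos (2 * j * Real.pi / n)) /
          (1 + s ^ 2 - 2 * s * Real.cos (2 * j * Real.pi / n)) ^ ((3 : ℝ) / 2))
    (hg : g = fun s => (1 / (n : ℝ)) * ∑ j ∈ Finset.Icc 1 n,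
        (1 - s ^ 4 * Real.cos (2 * j * Real.pi / n)) /
          (1 + s ^ 2 - 2 * s * Real.cos (2 * j * Real.pi / n)) ^ ((3 : ℝ) / 2))
    (h1 : ℝ)
    (hh1 : h1 = (1 / (4 * (n : ℝ))) * ∑ j ∈ Finset.Icc 1 (n - 1),
        1 / Real.sin (j * Real.pi / n)) :
    Filter.Tendsto (fun s => (g s - h1) / (h s - h1))
      (nhdsWithin 1 (Set.Iio 1)) (nhds 4) := by
  have hn0 : (0 : ℝ) < n := by
    have : (2 : ℝ) ≤ n := by exact_mod_cast hn
    linarith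
  have hnne : (n : ℝ) ≠ 0 := ne_of_gt hn0
  -- cosine at j = n is 1
  have hcn : Real.cos (2 * (n : ℝ) * Real.pi / n) = 1 := by
    have e : 2 * (n : ℝ) * Real.pi / n = 2 * Real.pi := by field_simp
    rw [e, Real.cos_two_pi]
  -- cosine < 1 for 1 ≤ j ≤ n-1
  have hclt : ∀ j ∈ Finset.Icc 1 (n - 1), Real.cos (2 * (j : ℝ) * Real.pi / n) < 1 := by
    intro j hj
    rw [Finset.mem_Icc] at hj
    refine lt_of_le_of_ne (Real.cos_le_one _) ?_
    intro hcj
    rw [Real.cos_eq_one_iff] at hcj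
    obtain ⟨k, hk⟩ := hcj
    have hjn : (j : ℝ) < n := by
      have : j < n := by omega
      exact_mod_cast this
    have hj1 : (1 : ℝ) ≤ j := by exact_mod_cast hj.1
    have hkn : (k : ℝ) * n = j := by
      have hpi := Real.pi_pos
      field_simp at hk
      nlinarith [hk]
    rcases le_or_gt k 0 with hk0 | hk0
    · have : (k : ℝ) ≤ 0 := by exact_mod_cast hk0
      nlinarith
    · have : (1 : ℝ) ≤ (k : ℝ) := by exact_mod_cast hk0
      nlinarith
  -- denominator positive at s = 1 for j ≤ n-1
  have hdpos : ∀ j ∈ Finset.Icc 1 (n - 1),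
      (0 : ℝ) < 1 + 1 ^ 2 - 2 * 1 * Real.cos (2 * (j : ℝ) * Real.pi / n) := by
    intro j hj
    have := hclt j hj
    nlinarith
  -- small terms tend to 0
  have hsmall : ∀ (p : ℝ → ℝ), Continuous p → ∀ j ∈ Finset.Icc 1 (n - 1),
      Filter.Tendsto (fun s : ℝ => (1 - s) ^ 2 *
        (p s / (1 + s ^ 2 - 2 * s * Real.cos (2 * (j : ℝ) * Real.pi / n)) ^ ((3 : ℝ) / 2)))
        (nhdsWithin 1 (Set.Iio 1)) (nhds 0) := by
    intro p hp j hj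
    have hd1 : (1 + (1 : ℝ) ^ 2 - 2 * 1 * Real.cos (2 * (j : ℝ) * Real.pi / n)) ^ ((3 : ℝ) / 2)
        ≠ 0 := ne_of_gt (Real.rpow_pos_of_pos (hdpos j hj) _)
    have hden : Continuous fun s : ℝ =>
        (1 + s ^ 2 - 2 * s * Real.cos (2 * (j : ℝ) * Real.pi / n)) ^ ((3 : ℝ) / 2) := by
      apply Continuous.rpow_const (by fun_prop)
      intro x; right; norm_num
    have hca : ContinuousAt (fun s : ℝ => (1 - s) ^ 2 *
        (p s / (1 + s ^ 2 - 2 * s * Real.cos (2 * (j : ℝ) * Real.pi / n)) ^ ((3 : ℝ) / 2))) 1 :=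
      (ContinuousAt.pow (by fun_prop) 2).mul (hp.continuousAt.div hden.continuousAt hd1)
    have h0 : Filter.Tendsto (fun s : ℝ => (1 - s) ^ 2 *
        (p s / (1 + s ^ 2 - 2 * s * Real.cos (2 * (j : ℝ) * Real.pi / n)) ^ ((3 : ℝ) / 2)))
        (nhds 1) (nhds 0) := by
      have := hca.tendsto
      simpa using this
    exact h0.mono_left nhdsWithin_le_nhds
  -- sum splitting
  have hsplit : ∀ f : ℕ → ℝ, ∑ j ∈ Finset.Icc 1 n, f j
      = (∑ j ∈ Finset.Icc 1 (n - 1), f j) + f n := by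
    intro f
    have hn1 : n = (n - 1) + 1 := by omega
    rw [hn1]
    rw [Finset.sum_Icc_succ_top (by omega : 1 ≤ (n - 1) + 1)]
    rw [← hn1]
  -- denominator at j = n
  have hdn : ∀ s : ℝ, 1 + s ^ 2 - 2 * s * Real.cos (2 * (n : ℝ) * Real.pi / n)
      = (1 - s) ^ 2 := by
    intro s; rw [hcn]; ring
  -- h1 term tends to 0
  have h2 : Filter.Tendsto (fun s : ℝ => (1 - s) ^ 2 * h1)
      (nhdsWithin 1 (Set.Iio 1)) (nhds 0) := by
    have hca : ContinuousAt (fun s : ℝ => (1 - s) ^ 2 * h1) 1 := by fun_prop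
    have h0 : Filter.Tendsto (fun s : ℝ => (1 - s) ^ 2 * h1) (nhds 1) (nhds 0) := by
      have := hca.tendsto
      simpa using this
    exact h0.mono_left nhdsWithin_le_nhds
  -- F tendsto
  have hF : Filter.Tendsto (fun s : ℝ => (1 - s) ^ 2 * (h s - h1))
      (nhdsWithin 1 (Set.Iio 1)) (nhds (1 / (n : ℝ))) := by
    have heq : ∀ s ∈ Set.Iio (1 : ℝ), (1 / (n : ℝ)) * ((∑ j ∈ Finset.Icc 1 (n - 1),
            (1 - s) ^ 2 * ((1 - s * Real.cos (2 * (j : ℝ) * Real.pi / n)) /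
              (1 + s ^ 2 - 2 * s * Real.cos (2 * (j : ℝ) * Real.pi / n)) ^ ((3 : ℝ) / 2)))
            + 1) - (1 - s) ^ 2 * h1
        = (1 - s) ^ 2 * (h s - h1) := by
      intro s hs
      have hs1 : 0 < 1 - s := by simp only [Set.mem_Iio] at hs; linarith
      have htop : (1 - s) ^ 2 * ((1 - s * Real.cos (2 * (n : ℝ) * Real.pi / n)) /
          (1 + s ^ 2 - 2 * s * Real.cos (2 * (n : ℝ) * Real.pi / n)) ^ ((3 : ℝ) / 2)) = 1 := by
        rw [hdn, hcn, sq_rpow_three_halves hs1, mul_one]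
        have h3 : (1 - s) ^ 3 ≠ 0 := by positivity
        field_simp
      rw [hh]
      simp only
      have key : (1 - s) ^ 2 * (∑ j ∈ Finset.Icc 1 n,
          (1 - s * Real.cos (2 * (j : ℝ) * Real.pi / n)) /
            (1 + s ^ 2 - 2 * s * Real.cos (2 * (j : ℝ) * Real.pi / n)) ^ ((3 : ℝ) / 2))
          = (∑ j ∈ Finset.Icc 1 (n - 1),
            (1 - s) ^ 2 * ((1 - s * Real.cos (2 * (j : ℝ) * Real.pi / n)) /
              (1 + s ^ 2 - 2 * s * Real.cos (2 * (j : ℝ) * Real.pi / n)) ^ ((3 : ℝ) / 2))) + 1 := by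
        rw [Finset.mul_sum]
        rw [hsplit (fun j => (1 - s) ^ 2 * ((1 - s * Real.cos (2 * (j : ℝ) * Real.pi / n)) /
          (1 + s ^ 2 - 2 * s * Real.cos (2 * (j : ℝ) * Real.pi / n)) ^ ((3 : ℝ) / 2)))]
        rw [htop]
      rw [← key]
      ring
    have hsum : Filter.Tendsto (fun s : ℝ => ∑ j ∈ Finset.Icc 1 (n - 1),
        (1 - s) ^ 2 * ((1 - s * Real.cos (2 * (j : ℝ) * Real.pi / n)) /
          (1 + s ^ 2 - 2 * s * Real.cos (2 * (j : ℝ) * Real.pi / n)) ^ ((3 : ℝ) / 2)))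
        (nhdsWithin 1 (Set.Iio 1)) (nhds 0) := by
      have := tendsto_finset_sum (Finset.Icc 1 (n - 1)) (fun j hj =>
        hsmall (fun s => 1 - s * Real.cos (2 * (j : ℝ) * Real.pi / n)) (by fun_prop) j hj)
      simpa only [Finset.sum_const_zero] using this
    have hmain := ((hsum.add_const 1).const_mul (1 / (n : ℝ))).sub h2
    rw [show (1 / (n : ℝ)) * (0 + 1) - 0 = 1 / (n : ℝ) by ring] at hmain
    exact Filter.Tendsto.congr' (Filter.eventuallyEq_of_mem self_mem_nhdsWithin
      (fun s hs => heq s hs)) hmain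
  -- G tendsto
  have hG : Filter.Tendsto (fun s : ℝ => (1 - s) ^ 2 * (g s - h1))
      (nhdsWithin 1 (Set.Iio 1)) (nhds (4 / (n : ℝ))) := by
    have heq : ∀ s ∈ Set.Iio (1 : ℝ), (1 / (n : ℝ)) * ((∑ j ∈ Finset.Icc 1 (n - 1),
            (1 - s) ^ 2 * ((1 - s ^ 4 * Real.cos (2 * (j : ℝ) * Real.pi / n)) /
              (1 + s ^ 2 - 2 * s * Real.cos (2 * (j : ℝ) * Real.pi / n)) ^ ((3 : ℝ) / 2)))
            + (1 + s + s ^ 2 + s ^ 3)) - (1 - s) ^ 2 * h1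
        = (1 - s) ^ 2 * (g s - h1) := by
      intro s hs
      have hs1 : 0 < 1 - s := by simp only [Set.mem_Iio] at hs; linarith
      have htop : (1 - s) ^ 2 * ((1 - s ^ 4 * Real.cos (2 * (n : ℝ) * Real.pi / n)) /
          (1 + s ^ 2 - 2 * s * Real.cos (2 * (n : ℝ) * Real.pi / n)) ^ ((3 : ℝ) / 2))
          = 1 + s + s ^ 2 + s ^ 3 := by
        rw [hdn, hcn, sq_rpow_three_halves hs1, mul_one]
        have h3 : (1 - s) ^ 3 ≠ 0 := by positivity
        field_simp
        ring
      rw [hg]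
      simp only
      have key : (1 - s) ^ 2 * (∑ j ∈ Finset.Icc 1 n,
          (1 - s ^ 4 * Real.cos (2 * (j : ℝ) * Real.pi / n)) /
            (1 + s ^ 2 - 2 * s * Real.cos (2 * (j : ℝ) * Real.pi / n)) ^ ((3 : ℝ) / 2))
          = (∑ j ∈ Finset.Icc 1 (n - 1),
            (1 - s) ^ 2 * ((1 - s ^ 4 * Real.cos (2 * (j : ℝ) * Real.pi / n)) /
              (1 + s ^ 2 - 2 * s * Real.cos (2 * (j : ℝ) * Real.pi / n)) ^ ((3 : ℝ) / 2)))
            + (1 + s + s ^ 2 + s ^ 3) := by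
        rw [Finset.mul_sum]
        rw [hsplit (fun j => (1 - s) ^ 2 * ((1 - s ^ 4 * Real.cos (2 * (j : ℝ) * Real.pi / n)) /
          (1 + s ^ 2 - 2 * s * Real.cos (2 * (j : ℝ) * Real.pi / n)) ^ ((3 : ℝ) / 2)))]
        rw [htop]
      rw [← key]
      ring
    have hsum : Filter.Tendsto (fun s : ℝ => ∑ j ∈ Finset.Icc 1 (n - 1),
        (1 - s) ^ 2 * ((1 - s ^ 4 * Real.cos (2 * (j : ℝ) * Real.pi / n)) /
          (1 + s ^ 2 - 2 * s * Real.cos (2 * (j : ℝ) * Real.pi / n)) ^ ((3 : ℝ) / 2)))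
        (nhdsWithin 1 (Set.Iio 1)) (nhds 0) := by
      have := tendsto_finset_sum (Finset.Icc 1 (n - 1)) (fun j hj =>
        hsmall (fun s => 1 - s ^ 4 * Real.cos (2 * (j : ℝ) * Real.pi / n)) (by fun_prop) j hj)
      simpa only [Finset.sum_const_zero] using this
    have hpoly : Filter.Tendsto (fun s : ℝ => 1 + s + s ^ 2 + s ^ 3)
        (nhdsWithin 1 (Set.Iio 1)) (nhds 4) := by
      have hca : ContinuousAt (fun s : ℝ => 1 + s + s ^ 2 + s ^ 3) 1 := by fun_prop
      have h0 : Filter.Tendsto (fun s : ℝ => 1 + s + s ^ 2 + s ^ 3) (nhds 1) (nhds 4) := by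
        have := hca.tendsto
        norm_num at this
        exact this
      exact h0.mono_left nhdsWithin_le_nhds
    have hmain := (((hsum.add hpoly).const_mul (1 / (n : ℝ))).sub h2)
    rw [show (1 / (n : ℝ)) * (0 + 4) - 0 = 4 / (n : ℝ) by ring] at hmain
    exact Filter.Tendsto.congr' (Filter.eventuallyEq_of_mem self_mem_nhdsWithin
      (fun s hs => heq s hs)) hmain
  -- conclude
  have hFne : (1 : ℝ) / n ≠ 0 := div_ne_zero one_ne_zero hnne
  have hdivlim := hG.div hF hFne
  have e : (4 / (n : ℝ)) / (1 / n) = 4 := by field_simp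
  rw [e] at hdivlim
  have hev : ∀ s ∈ Set.Iio (1 : ℝ), (1 - s) ^ 2 * (g s - h1) / ((1 - s) ^ 2 * (h s - h1))
      = (g s - h1) / (h s - h1) := by
    intro s hs
    have hslt : s < 1 := hs
    have hs1 : (1 - s) ^ 2 ≠ 0 :=
      pow_ne_zero 2 (ne_of_gt (by linarith : (0 : ℝ) < 1 - s))
    rw [mul_div_mul_left _ _ hs1]
  exact Filter.Tendsto.congr' (Filter.eventuallyEq_of_mem self_mem_nhdsWithin
    (fun s hs => hev s hs)) hdivlim
end

section
/- Let n ≥ 2 be an integer. For s ∈ (0, 1) define h_n(s) = (1/n)·∑_{j=1}^{n} (1 − s·cos(2jπ/n))/(1 + s² − 2s·cos(2jπ/n))^{3/2}, set h_n(1) = (1/(4n))·∑_{j=1}^{n−1} 1/sin(jπ/n), and define G_n(s) = (3(1 − s³)/(2n))·∑_{j=1}^{n} (1 + s²·cos(4jπ/n) − 2s·cos(2jπ/n))/(1 + s² − 2s·cos(2jπ/n))^{5/2} + (3/2)·(s³·h_n(s) − h_n(1)). Then the limit as s → 1 from the left of G_n(s)/(h_n(s) − h_n(1)) exists and equals 6.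 -/
open Real Filter Set Finset

private lemma sq_rpow_three_halves_s18 {x : ℝ} (hx : 0 ≤ x) :
    (x ^ 2) ^ ((3:ℝ)/2) = x ^ 3 := by
  rw [← Real.rpow_natCast x 2, ← Real.rpow_mul hx, ← Real.rpow_natCast x 3]
  norm_num

private lemma sq_rpow_five_halves {x : ℝ} (hx : 0 ≤ x) :
    (x ^ 2) ^ ((5:ℝ)/2) = x ^ 5 := by
  rw [← Real.rpow_natCast x 2, ← Real.rpow_mul hx, ← Real.rpow_natCast x 5]
  norm_num

/-- with
`h_n(s) = (1/n)∑_{j=1}^{n} (1 − s·cos(2jπ/n))/(1 + s² − 2s·cos(2jπ/n))^{3/2}`,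
`h_n(1) = (1/(4n))∑_{j=1}^{n−1} 1/sin(jπ/n)` and
`G_n(s) = (3(1 − s³)/(2n))∑_{j=1}^{n} (1 + s²cos(4jπ/n) − 2s·cos(2jπ/n))/(1 + s² − 2s·cos(2jπ/n))^{5/2} + (3/2)(s³h_n(s) − h_n(1))`,
the limit of `G_n(s)/(h_n(s) − h_n(1))` as `s → 1⁻` exists and equals `6`. -/
theorem statement18 (n : ℕ) (hn : 2 ≤ n)
    (h G : ℝ → ℝ)
    (hh : h = fun s => (1 / (n : ℝ)) * ∑ j ∈ Finset.Icc 1 n,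
        (1 - s * Real.cos (2 * j * Real.pi / n)) /
          (1 + s ^ 2 - 2 * s * Real.cos (2 * j * Real.pi / n)) ^ ((3 : ℝ) / 2))
    (h1 : ℝ)
    (hh1 : h1 = (1 / (4 * (n : ℝ))) * ∑ j ∈ Finset.Icc 1 (n - 1),
        1 / Real.sin (j * Real.pi / n))
    (hG : G = fun s => (3 * (1 - s ^ 3) / (2 * (n : ℝ))) * ∑ j ∈ Finset.Icc 1 n,
        (1 + s ^ 2 * Real.cos (4 * j * Real.pi / n) - 2 * s * Real.cos (2 * j * Real.pi / n)) /
          (1 + s ^ 2 - 2 * s * Real.cos (2 * j * Real.pi / n)) ^ ((5 : ℝ) / 2)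
      + (3 / 2) * (s ^ 3 * h s - h1)) :
    Filter.Tendsto (fun s => G s / (h s - h1))
      (nhdsWithin 1 (Set.Iio 1)) (nhds 6) := by
  have hn0 : (0:ℝ) < n := by exact_mod_cast Nat.lt_of_lt_of_le Nat.zero_lt_two hn
  have hnne : (n:ℝ) ≠ 0 := ne_of_gt hn0
  set A : ℝ → ℝ := fun s => ∑ j ∈ Finset.Icc 1 (n-1),
      (1 - s * Real.cos (2 * j * Real.pi / n)) /
        (1 + s ^ 2 - 2 * s * Real.cos (2 * j * Real.pi / n)) ^ ((3 : ℝ) / 2) with hA_def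
  set B : ℝ → ℝ := fun s => ∑ j ∈ Finset.Icc 1 (n-1),
      (1 + s ^ 2 * Real.cos (4 * j * Real.pi / n) - 2 * s * Real.cos (2 * j * Real.pi / n)) /
        (1 + s ^ 2 - 2 * s * Real.cos (2 * j * Real.pi / n)) ^ ((5 : ℝ) / 2) with hB_def
  have hcos : ∀ j ∈ Finset.Icc 1 (n-1), Real.cos (2 * (j:ℝ) * Real.pi / n) < 1 := by
    intro j hj
    rw [Finset.mem_Icc] at hj
    have hj1 : (1:ℝ) ≤ (j:ℝ) := by exact_mod_cast hj.1
    have hjn : (j:ℝ) < (n:ℝ) := by exact_mod_cast (by omega : j < n)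
    have hx0 : 0 < 2 * (j:ℝ) * Real.pi / n := by positivity
    have hx2 : 2 * (j:ℝ) * Real.pi / n < 2 * Real.pi := by
      rw [div_lt_iff₀ hn0]
      have := Real.pi_pos
      nlinarith
    refine lt_of_le_of_ne (Real.cos_le_one _) (fun hc => ?_)
    have := (Real.cos_eq_one_iff_of_lt_of_lt (by linarith) hx2).mp hc
    linarith
  have hden : ∀ j ∈ Finset.Icc 1 (n-1),
      (0:ℝ) < 1 + (1:ℝ) ^ 2 - 2 * 1 * Real.cos (2 * (j:ℝ) * Real.pi / n) := by
    intro j hj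
    have := hcos j hj
    nlinarith
  have hAcont : ContinuousAt A 1 := by
    apply tendsto_finset_sum
    intro j hj
    have hne : (1 + (1:ℝ) ^ 2 - 2 * 1 * Real.cos (2 * (j:ℝ) * Real.pi / n)) ≠ 0 :=
      ne_of_gt (hden j hj)
    have hbase : ContinuousAt
        (fun s : ℝ => 1 + s ^ 2 - 2 * s * Real.cos (2 * (j:ℝ) * Real.pi / n)) 1 := by fun_prop
    exact ContinuousAt.div (by fun_prop) (hbase.rpow_const (Or.inl hne))
      (ne_of_gt (Real.rpow_pos_of_pos (hden j hj) _))
  have hBcont : ContinuousAt B 1 := by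
    apply tendsto_finset_sum
    intro j hj
    have hne : (1 + (1:ℝ) ^ 2 - 2 * 1 * Real.cos (2 * (j:ℝ) * Real.pi / n)) ≠ 0 :=
      ne_of_gt (hden j hj)
    have hbase : ContinuousAt
        (fun s : ℝ => 1 + s ^ 2 - 2 * s * Real.cos (2 * (j:ℝ) * Real.pi / n)) 1 := by fun_prop
    exact ContinuousAt.div (by fun_prop) (hbase.rpow_const (Or.inl hne))
      (ne_of_gt (Real.rpow_pos_of_pos (hden j hj) _))
  set F : ℝ → ℝ := fun s => 3 * (1 - s^3) / (2*(n:ℝ)) * ((1-s)^2 * B s)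
      + 3 * (1 + s + s^2) / (2*(n:ℝ))
      + (3/2) * (s^3 * ((1/(n:ℝ)) * ((1-s)^2 * A s + 1)) - h1 * (1-s)^2) with hF_def
  set g : ℝ → ℝ := fun s => (1/(n:ℝ)) * ((1-s)^2 * A s + 1) - h1 * (1-s)^2 with hg_def
  have hins : Finset.Icc 1 n = insert n (Finset.Icc 1 (n-1)) := by
    ext j; simp only [Finset.mem_Icc, Finset.mem_insert]; omega
  have hnotmem : n ∉ Finset.Icc 1 (n-1) := by simp only [Finset.mem_Icc]; omega
  have hcosn : Real.cos (2 * (n:ℝ) * Real.pi / n) = 1 := by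
    rw [show 2 * (n:ℝ) * Real.pi / n = 2 * Real.pi by field_simp, Real.cos_two_pi]
  have hcos4n : Real.cos (4 * (n:ℝ) * Real.pi / n) = 1 := by
    rw [show 4 * (n:ℝ) * Real.pi / n = 2 * Real.pi + 2 * Real.pi by field_simp; ring,
      Real.cos_add_two_pi, Real.cos_two_pi]
  have hkey : ∀ s : ℝ, s < 1 →
      (h s - h1) * (1-s)^2 = g s ∧ G s * (1-s)^2 = F s := by
    intro s hs
    have h1s : (0:ℝ) < 1 - s := by linarith
    have h1sne : (1:ℝ) - s ≠ 0 := ne_of_gt h1s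
    have hhs : h s = (1/(n:ℝ)) * ((1-s) / (1-s)^3 + A s) := by
      simp only [hh, hins, Finset.sum_insert hnotmem, hcosn, hA_def]
      rw [show 1 + s^2 - 2*s*1 = (1-s)^2 by ring, sq_rpow_three_halves_s18 h1s.le]
      ring
    constructor
    · simp only [hhs, hg_def]
      generalize A s = a
      field_simp
      ring
    · have hGs : G s = 3 * (1 - s^3) / (2*(n:ℝ)) * ((1-s)^2 / (1-s)^5 + B s)
          + (3/2) * (s^3 * h s - h1) := by
        simp only [hG, hins, Finset.sum_insert hnotmem, hcosn, hcos4n, hB_def]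
        rw [show 1 + s^2 - 2*s*1 = (1-s)^2 by ring, sq_rpow_five_halves h1s.le]
        ring
      simp only [hGs, hhs, hF_def]
      generalize A s = a
      generalize B s = b
      field_simp
      ring
  have hg1 : g 1 = 1/(n:ℝ) := by simp [hg_def]
  have hg1ne : g 1 ≠ 0 := by rw [hg1]; positivity
  have hF1 : F 1 = 6/(n:ℝ) := by
    simp only [hF_def]
    norm_num
    ring
  have hFcont : ContinuousAt F 1 := by
    apply ContinuousAt.add
    apply ContinuousAt.add
    · exact ContinuousAt.mul (by fun_prop) (ContinuousAt.mul (by fun_prop) hBcont)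
    · fun_prop
    · exact ContinuousAt.mul (by fun_prop) (ContinuousAt.sub (ContinuousAt.mul (by fun_prop)
        (ContinuousAt.mul (by fun_prop) (ContinuousAt.add
          (ContinuousAt.mul (by fun_prop) hAcont) (by fun_prop)))) (by fun_prop))
  have hgcont : ContinuousAt g 1 := by
    exact ContinuousAt.sub (ContinuousAt.mul (by fun_prop)
      (ContinuousAt.add (ContinuousAt.mul (by fun_prop) hAcont) (by fun_prop))) (by fun_prop)
  have hlim0 : Filter.Tendsto (fun s => F s / g s) (nhds 1) (nhds (F 1 / g 1)) :=
    hFcont.div hgcont hg1ne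
  rw [hF1, hg1, show (6:ℝ)/(n:ℝ) / (1/(n:ℝ)) = 6 by field_simp] at hlim0
  have hlim : Filter.Tendsto (fun s => F s / g s) (nhdsWithin 1 (Set.Iio 1)) (nhds 6) :=
    hlim0.mono_left nhdsWithin_le_nhds
  refine hlim.congr' ?_
  filter_upwards [self_mem_nhdsWithin] with s hs
  have hsl : s < 1 := hs
  have h1sne : ((1:ℝ) - s)^2 ≠ 0 := by
    have : (0:ℝ) < 1 - s := by linarith
    positivity
  obtain ⟨e1, e2⟩ := hkey s hsl
  rw [← e1, ← e2, IsUnit.mul_div_mul_right (isUnit_iff_ne_zero.mpr h1sne)]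
end

section
/- Let n ≥ 2 be an integer and set αⱼ = (2j + 1)π/n for j = 1, …, n. Then cos αⱼ ≠ 1 for every j, and (1/(2n))·∑_{j=1}^{n} (2 − 2cos αⱼ)^{−3/2} + (1/n)·∑_{j=1}^{n} (1 − cos αⱼ)·(2 − 2cos αⱼ)^{−3/2} − (3/(2n))·∑_{j=1}^{n} (1 + cos 2αⱼ − 2cos αⱼ)·(2 − 2cos αⱼ)^{−5/2} > 0. -/
lemma aux_cos_ne_one (n j : ℕ) (hn : 1 ≤ n) :
    Real.cos ((2 * j + 1) * Real.pi / n) ≠ 1 := by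
  intro h
  rw [Real.cos_eq_one_iff] at h
  obtain ⟨k, hk⟩ := h
  have hπ : Real.pi ≠ 0 := Real.pi_ne_zero
  have hn0 : (n : ℝ) ≠ 0 := by positivity
  have h2 : ((k : ℝ) * (2 * n)) * Real.pi = (2 * j + 1) * Real.pi := by
    field_simp at hk
    rw [← hk]; ring
  have h3 : (k : ℝ) * (2 * n) = 2 * j + 1 := mul_right_cancel₀ hπ h2
  have h4 : (k : ℤ) * (2 * n) = 2 * j + 1 := by exact_mod_cast h3
  have h5 : (2:ℤ) ∣ 2 * (j:ℤ) + 1 := h4 ▸ ⟨k * n, by ring⟩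
  omega

lemma aux_key (n : ℝ) (hn : 0 < n) (c : ℝ) (hc1 : -1 ≤ c) (hc2 : c < 1) :
    0 < 1 / (2 * n) * (2 - 2 * c) ^ (-(3 : ℝ) / 2)
      + 1 / n * ((1 - c) * (2 - 2 * c) ^ (-(3 : ℝ) / 2))
      - 3 / (2 * n) * ((1 + (2 * c ^ 2 - 1) - 2 * c) * (2 - 2 * c) ^ (-(5 : ℝ) / 2)) := by
  have hd : (0:ℝ) < 2 - 2 * c := by linarith
  have hsplit : (2 - 2 * c) ^ (-(5 : ℝ) / 2)
      = (2 - 2 * c) ^ (-(3 : ℝ) / 2) * (2 - 2 * c)⁻¹ := by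
    rw [← Real.rpow_neg_one (2 - 2 * c), ← Real.rpow_add hd]
    norm_num
  have ht : (0:ℝ) < (2 - 2 * c) ^ (-(3 : ℝ) / 2) := Real.rpow_pos_of_pos hd _
  rw [hsplit]
  have heq : 1 / (2 * n) * (2 - 2 * c) ^ (-(3 : ℝ) / 2)
      + 1 / n * ((1 - c) * (2 - 2 * c) ^ (-(3 : ℝ) / 2))
      - 3 / (2 * n) * ((1 + (2 * c ^ 2 - 1) - 2 * c) * ((2 - 2 * c) ^ (-(3 : ℝ) / 2) * (2 - 2 * c)⁻¹))
      = (2 - 2 * c) ^ (-(3 : ℝ) / 2) * ((3 + c) / (2 * n)) := by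
    have hd' : (2:ℝ) - 2 * c ≠ 0 := hd.ne'
    have h1c : (1:ℝ) - c ≠ 0 := (by linarith : (0:ℝ) < 1 - c).ne'
    field_simp
    ring
  rw [heq]
  apply mul_pos ht
  have : (0:ℝ) < 3 + c := by linarith
  positivity

/-- for `n ≥ 2` and `αⱼ = (2j + 1)π/n`, `cos αⱼ ≠ 1` for every
`j = 1, …, n`, and
`(1/(2n))∑ (2 − 2cos αⱼ)^{−3/2} + (1/n)∑ (1 − cos αⱼ)(2 − 2cos αⱼ)^{−3/2}
  − (3/(2n))∑ (1 + cos 2αⱼ − 2cos αⱼ)(2 − 2cos αⱼ)^{−5/2} > 0`. -/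
theorem statement19 (n : ℕ) (hn : 2 ≤ n) (α : ℕ → ℝ)
    (hα : ∀ j, α j = (2 * j + 1) * Real.pi / n) :
    (∀ j ∈ Finset.Icc 1 n, Real.cos (α j) ≠ 1) ∧
      0 < (1 / (2 * (n : ℝ))) * ∑ j ∈ Finset.Icc 1 n,
            (2 - 2 * Real.cos (α j)) ^ (-(3 : ℝ) / 2)
          + (1 / (n : ℝ)) * ∑ j ∈ Finset.Icc 1 n,
            (1 - Real.cos (α j)) * (2 - 2 * Real.cos (α j)) ^ (-(3 : ℝ) / 2)
          - (3 / (2 * (n : ℝ))) * ∑ j ∈ Finset.Icc 1 n,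
            (1 + Real.cos (2 * α j) - 2 * Real.cos (α j)) *
              (2 - 2 * Real.cos (α j)) ^ (-(5 : ℝ) / 2) := by
  have hn1 : 1 ≤ n := le_trans (by norm_num) hn
  have hne : ∀ j : ℕ, Real.cos (α j) ≠ 1 := by
    intro j
    rw [hα j]
    exact aux_cos_ne_one n j hn1
  refine ⟨fun j _ => hne j, ?_⟩
  rw [Finset.mul_sum, Finset.mul_sum, Finset.mul_sum, ← Finset.sum_add_distrib,
    ← Finset.sum_sub_distrib]
  apply Finset.sum_pos
  · intro j _
    have hc2 : Real.cos (α j) < 1 := lt_of_le_of_ne (Real.cos_le_one _) (hne j)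
    rw [Real.cos_two_mul]
    exact aux_key n (by exact_mod_cast hn1) _ (Real.neg_one_le_cos _) hc2
  · exact Finset.nonempty_Icc.mpr hn1
end
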